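/- arXiv:1707.04697 — 2 statements merged into one kernel-verified Lean document; each statement's English description precedes it below -/
import Mathlib

section
/- Let R be a commutative ring with identity which is not an integral domain, and let I and J be distinct nonzero annihilating ideals of R. If Ann_R(I) ⊄ Ann_R(J) and Ann_R(J) ⊄ Ann_R(I), then I and J are adjacent in the annihilator-ideal graph A_I(R). Moreover, if R is reduced, then the converse also holds: if I and J are adjacent in A_I(R), then Ann_R(I) ⊄ Ann_R(J) and Ann_R(J) ⊄ Ann_R(I). -/
/-- The vertex set of the annihilator-ideal/annihilating-ideal graphs:
nonzero ideals with nonzero annihilator. -/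
abbrev AnnVert (R : Type*) [CommRing R] : Type _ :=
  {I : Ideal R // I ≠ ⊥ ∧ Submodule.annihilator I ≠ ⊥}

/-- The annihilator-ideal graph `A_I(R)`. -/
def annihilatorIdealGraph (R : Type*) [CommRing R] : SimpleGraph (AnnVert R) where
  Adj I J := I ≠ J ∧
    ((Submodule.annihilator (I.1 * J.1) : Ideal R) : Set R) ≠
      ↑(Submodule.annihilator I.1) ∪ ↑(Submodule.annihilator J.1)
  symm := ⟨by
    rintro I J ⟨hne, h⟩
    exact ⟨hne.symm, by rwa [mul_comm, Set.union_comm]⟩⟩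
  loopless := ⟨by rintro I ⟨h, -⟩; exact h rfl⟩

/-- The annihilating-ideal graph `𝔸𝔾(R)`. -/
def annihilatingIdealGraph (R : Type*) [CommRing R] : SimpleGraph (AnnVert R) where
  Adj I J := I ≠ J ∧ I.1 * J.1 = ⊥
  symm := ⟨by rintro I J ⟨hne, h⟩; exact ⟨hne.symm, by rwa [mul_comm]⟩⟩
  loopless := ⟨by rintro I ⟨h, -⟩; exact h rfl⟩

/-- `G` is a complete bipartite graph with parts `s` and `t`. -/
def SimpleGraph.IsCompleteBipartiteWith {V : Type*} (G : SimpleGraph V) (s t : Set V) : Prop :=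
  Disjoint s t ∧ s ∪ t = Set.univ ∧
    ∀ u v, G.Adj u v ↔ (u ∈ s ∧ v ∈ t) ∨ (u ∈ t ∧ v ∈ s)

/-- `G` is a star graph: complete bipartite with one part a single vertex and the
other part nonempty. -/
def SimpleGraph.IsStarGraph {V : Type*} (G : SimpleGraph V) : Prop :=
  ∃ (c : V) (t : Set V), t.Nonempty ∧ G.IsCompleteBipartiteWith {c} t


lemma mem_ann_mul' {R : Type*} [CommRing R] (I J : Ideal R) (r : R)
    (h : ∀ x ∈ I, ∀ y ∈ J, r * (x * y) = 0) :
    r ∈ Submodule.annihilator (I * J) := by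
  rw [Submodule.mem_annihilator]
  intro n hn
  refine Submodule.mul_induction_on hn (fun x hx y hy => h x hx y hy) ?_
  intro a b ha hb
  simp only [smul_eq_mul] at *
  rw [mul_add, ha, hb, add_zero]

lemma ann_mul_le_of_le {R : Type*} [CommRing R] [IsReduced R] (I J : Ideal R)
    (h : Submodule.annihilator I ≤ Submodule.annihilator J) :
    Submodule.annihilator (I * J) ≤ Submodule.annihilator J := by
  intro r hr
  rw [Submodule.mem_annihilator] at hr ⊢
  intro x hx
  have hrx : r * x ∈ Submodule.annihilator I := by
    rw [Submodule.mem_annihilator]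
    intro y hy
    have := hr (y * x) (Ideal.mul_mem_mul hy hx)
    simpa [smul_eq_mul, mul_comm, mul_left_comm, mul_assoc] using this
  have hrx' := h hrx
  rw [Submodule.mem_annihilator] at hrx'
  have h2 : (r * x) * (r * x) = 0 := by
    have := hrx' x hx
    simp only [smul_eq_mul] at this
    calc (r * x) * (r * x) = r * (r * x * x) := by ring
    _ = 0 := by rw [this, mul_zero]
  simpa using IsReduced.eq_zero _ ⟨2, by rw [pow_two]; exact h2⟩

lemma ann_left_le {R : Type*} [CommRing R] (I J : Ideal R) :
    Submodule.annihilator I ≤ Submodule.annihilator (I * J) := by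
  intro r hr
  rw [Submodule.mem_annihilator] at hr
  refine mem_ann_mul' I J r fun x hx y hy => ?_
  have := hr x hx
  simp only [smul_eq_mul] at this
  rw [← mul_assoc, this, zero_mul]

lemma ann_right_le {R : Type*} [CommRing R] (I J : Ideal R) :
    Submodule.annihilator J ≤ Submodule.annihilator (I * J) := by
  rw [mul_comm]; exact ann_left_le J I


theorem stmt5 (R : Type*) [CommRing R] [Nontrivial R] (hdom : ¬IsDomain R)
    (I J : AnnVert R) (hIJ : I ≠ J) :
    ((¬ Submodule.annihilator I.1 ≤ Submodule.annihilator J.1 ∧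
        ¬ Submodule.annihilator J.1 ≤ Submodule.annihilator I.1) →
      (annihilatorIdealGraph R).Adj I J) ∧
    (IsReduced R →
      (annihilatorIdealGraph R).Adj I J →
      (¬ Submodule.annihilator I.1 ≤ Submodule.annihilator J.1 ∧
        ¬ Submodule.annihilator J.1 ≤ Submodule.annihilator I.1)) := by
  constructor
  · rintro ⟨h1, h2⟩
    refine ⟨hIJ, ?_⟩
    rw [SetLike.not_le_iff_exists] at h1 h2
    obtain ⟨a, haI, haJ⟩ := h1
    obtain ⟨b, hbJ, hbI⟩ := h2
    intro heq
    have hab : a + b ∈ Submodule.annihilator (I.1 * J.1) := by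
      refine mem_ann_mul' I.1 J.1 _ fun x hx y hy => ?_
      rw [Submodule.mem_annihilator] at haI hbJ
      have h1 := haI x hx
      have h2 := hbJ y hy
      simp only [smul_eq_mul] at h1 h2
      calc (a + b) * (x * y) = (a * x) * y + (b * y) * x := by ring
      _ = 0 := by rw [h1, h2, zero_mul, zero_mul, add_zero]
    have : (a + b) ∈ (↑(Submodule.annihilator I.1) ∪ ↑(Submodule.annihilator J.1) : Set R) := by
      rw [← heq]; exact hab
    rcases this with h | h
    · exact hbI (by simpa using Submodule.sub_mem _ h haI)
    · exact haJ (by simpa using Submodule.sub_mem _ h hbJ)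
  · rintro hred ⟨-, hne⟩
    constructor
    · intro hle
      apply hne
      apply Set.eq_of_subset_of_subset
      · intro r hr
        right
        exact ann_mul_le_of_le I.1 J.1 hle hr
      · rintro r (h | h)
        · exact ann_left_le I.1 J.1 h
        · exact ann_right_le I.1 J.1 h
    · intro hle
      apply hne
      apply Set.eq_of_subset_of_subset
      · intro r hr
        left
        have := ann_mul_le_of_le J.1 I.1 hle
        rw [mul_comm] at this
        exact this hr
      · rintro r (h | h)
        · exact ann_left_le I.1 J.1 h
        · exact ann_right_le I.1 J.1 h
end

section
/- Let R be a reduced commutative ring with identity which is not an integral domain. Then the following are equivalent: (i) the annihilator-ideal graph A_I(R) is a complete graph; (ii) the annihilating-ideal graph 𝔸𝔾(R) is a complete graph; (iii) R is ring-isomorphic to F₁ × F₂ for some fields F₁ and F₂. -/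
section Aux
variable {R : Type*} [CommRing R]

lemma mem_ann_span_singleton {x r : R} :
    r ∈ Submodule.annihilator (Ideal.span {x} : Ideal R) ↔ r * x = 0 := by
  rw [Submodule.mem_annihilator]
  constructor
  · intro h
    simpa [smul_eq_mul] using h x (Ideal.mem_span_singleton_self x)
  · intro h y hy
    obtain ⟨c, rfl⟩ := Ideal.mem_span_singleton'.mp hy
    rw [smul_eq_mul]
    calc r * (c * x) = c * (r * x) := by ring
    _ = 0 := by rw [h, mul_zero]

lemma ann_top_eq_bot : (Submodule.annihilator (⊤ : Ideal R)) = ⊥ := by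
  rw [eq_bot_iff]
  intro r hr
  rw [Submodule.mem_annihilator] at hr
  have := hr 1 Submodule.mem_top
  rw [smul_eq_mul, mul_one] at this
  exact (Submodule.mem_bot R).mpr this

/-- Anything annihilating every element of an ideal contained in `span {f}`
(for idempotent `f`): `1 - f` works. -/
lemma one_sub_mem_ann {f : R} (hf : f * f = f) {M : Ideal R}
    (hM : M ≤ Ideal.span {f}) : (1 - f) ∈ Submodule.annihilator M := by
  rw [Submodule.mem_annihilator]
  intro x hx
  obtain ⟨c, hc⟩ := Ideal.mem_span_singleton'.mp (hM hx)
  rw [smul_eq_mul, ← hc]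
  calc (1 - f) * (c * f) = c * (f - f * f) := by ring
  _ = 0 := by rw [hf, sub_self, mul_zero]

/-- Key minimality lemma: if the annihilator-ideal graph is complete and `f` is
a nontrivial idempotent, then `span {f}` is a minimal ideal. -/
lemma min_ideal (hc : ∀ I J : AnnVert R, I ≠ J → (annihilatorIdealGraph R).Adj I J)
    {f : R} (hf : f * f = f) (hf0 : f ≠ 0) (hf1 : (1 : R) - f ≠ 0)
    {L : Ideal R} (hL : L ≤ Ideal.span {f}) (hL0 : L ≠ ⊥) : L = Ideal.span {f} := by
  by_contra hne
  have hannL : Submodule.annihilator L ≠ ⊥ := by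
    intro hbot
    have := one_sub_mem_ann hf hL
    rw [hbot, Submodule.mem_bot] at this
    exact hf1 this
  have hannf : Submodule.annihilator (Ideal.span {f} : Ideal R) ≠ ⊥ := by
    intro hbot
    have := one_sub_mem_ann hf (le_refl (Ideal.span {f}))
    rw [hbot, Submodule.mem_bot] at this
    exact hf1 this
  have hfbot : (Ideal.span {f} : Ideal R) ≠ ⊥ := fun h => hf0 (Ideal.span_singleton_eq_bot.mp h)
  set vL : AnnVert R := ⟨L, hL0, hannL⟩
  set vf : AnnVert R := ⟨Ideal.span {f}, hfbot, hannf⟩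
  have hvne : vL ≠ vf := fun h => hne (congrArg Subtype.val h)
  obtain ⟨-, hadj⟩ := hc vL vf hvne
  apply hadj
  have hmul : L * Ideal.span {f} = L := by
    apply le_antisymm Ideal.mul_le_left
    intro x hx
    obtain ⟨c, hc⟩ := Ideal.mem_span_singleton'.mp (hL hx)
    have hxf : x * f = x := by
      calc x * f = c * (f * f) := by rw [← hc]; ring
      _ = c * f := by rw [hf]
      _ = x := hc
    have : x * f ∈ L * Ideal.span {f} :=
      Ideal.mul_mem_mul hx (Ideal.mem_span_singleton_self f)
    rwa [hxf] at this
  show ((Submodule.annihilator (vL.1 * vf.1) : Ideal R) : Set R) = _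
  have : vL.1 * vf.1 = L := hmul
  rw [this]
  exact (Set.union_eq_left.mpr
    (SetLike.coe_subset_coe.mpr (Submodule.annihilator_mono hL))).symm

/-- If the annihilator-ideal graph is complete and `e` is a nontrivial idempotent,
then `span {e}` is maximal. -/
lemma max_ideal (hc : ∀ I J : AnnVert R, I ≠ J → (annihilatorIdealGraph R).Adj I J)
    {e : R} (he : e * e = e) (he0 : e ≠ 0) (he1 : (1 : R) - e ≠ 0) :
    (Ideal.span {e} : Ideal R).IsMaximal := by
  have hf : (1 - e) * (1 - e) = 1 - e := by
    have : (1 - e) * (1 - e) = 1 - e - e + e * e := by ring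
    rw [this, he]; ring
  have hf1 : (1 : R) - (1 - e) ≠ 0 := by
    rw [sub_sub_cancel]; exact he0
  constructor
  constructor
  · intro htop
    have h1 : (1 : R) ∈ Ideal.span {e} := htop ▸ Submodule.mem_top
    obtain ⟨c, hc⟩ := Ideal.mem_span_singleton'.mp h1
    apply he1
    calc (1 : R) - e = (c * e) * (1 - e) := by rw [hc]; ring
    _ = c * (e - e * e) := by ring
    _ = 0 := by rw [he, sub_self, mul_zero]
  · intro K hK
    by_cases hL : K ⊓ Ideal.span {1 - e} = ⊥
    · exfalso
      apply hK.2
      intro x hx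
      have hx1 : x * (1 - e) ∈ K ⊓ Ideal.span {1 - e} :=
        ⟨Ideal.mul_mem_right _ K hx, Ideal.mem_span_singleton'.mpr ⟨x, rfl⟩⟩
      rw [hL, Submodule.mem_bot] at hx1
      have hxe : x = x * e := by
        have h' : x - x * e = 0 := by rw [← hx1]; ring
        exact sub_eq_zero.mp h'
      rw [hxe]
      exact Ideal.mem_span_singleton'.mpr ⟨x, rfl⟩
    · have := min_ideal hc hf he1 hf1 (inf_le_right (a := K)) hL
      rw [Ideal.eq_top_iff_one]
      have h1e : (1 : R) - e ∈ K := by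
        have hmem : (1 : R) - e ∈ K ⊓ Ideal.span {1 - e} := by
          rw [this]; exact Ideal.mem_span_singleton_self (1 - e)
        exact (Submodule.mem_inf.mp hmem).1
      have hee : e ∈ K := hK.le (Ideal.mem_span_singleton_self e)
      have : (1 : R) = e + (1 - e) := by ring
      rw [this]
      exact K.add_mem hee h1e

end Aux

section ProdAux
variable {R F₁ F₂ : Type*} [CommRing R] [Field F₁] [Field F₂]

lemma mem_span_eps (φ : R ≃+* F₁ × F₂) (x : R) :
    x ∈ Ideal.span {φ.symm (1, 0)} ↔ (φ x).2 = 0 := by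
  have hφε : φ (φ.symm (1, 0)) = (1, 0) := φ.apply_symm_apply _
  constructor
  · intro hx
    obtain ⟨c, hc⟩ := Ideal.mem_span_singleton'.mp hx
    rw [← hc, map_mul, hφε, Prod.snd_mul]
    simp
  · intro hx
    have hxε : x * φ.symm (1, 0) = x := by
      apply φ.injective
      rw [map_mul, hφε]
      refine Prod.ext ?_ ?_
      · rw [Prod.fst_mul]; simp
      · rw [Prod.snd_mul]; simp [hx]
    exact hxε ▸ Ideal.mul_mem_left _ x (Ideal.mem_span_singleton_self _)

lemma span_eps_min (φ : R ≃+* F₁ × F₂) (L : Ideal R)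
    (hL : L ≤ Ideal.span {φ.symm (1, 0)}) (hL0 : L ≠ ⊥) :
    L = Ideal.span {φ.symm (1, 0)} := by
  obtain ⟨x, hxL, hx0⟩ := Submodule.exists_mem_ne_zero_of_ne_bot hL0
  have hx2 : (φ x).2 = 0 := (mem_span_eps φ x).mp (hL hxL)
  have hx1 : (φ x).1 ≠ 0 := by
    intro h
    apply hx0
    apply φ.injective
    rw [map_zero]
    exact Prod.ext (by simp [h]) (by simp [hx2])
  apply le_antisymm hL
  rw [Ideal.span_le, Set.singleton_subset_iff]
  have hkey : φ.symm (1, 0) = φ.symm ((φ x).1⁻¹, 0) * x := by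
    apply φ.injective
    rw [map_mul, φ.apply_symm_apply, φ.apply_symm_apply]
    refine Prod.ext ?_ ?_
    · rw [Prod.fst_mul]; simp [inv_mul_cancel₀ hx1]
    · rw [Prod.snd_mul]; simp
  rw [hkey]
  exact Ideal.mul_mem_left _ _ hxL

lemma three_to_two (φ : R ≃+* F₁ × F₂) :
    ∀ I J : AnnVert R, I ≠ J → (annihilatingIdealGraph R).Adj I J := by
  set ε := φ.symm (1, 0) with hεdef
  have hφε : φ ε = (1, 0) := φ.apply_symm_apply _
  have hφε' : φ (1 - ε) = (0, 1) := by
    rw [map_sub, map_one, hφε]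
    exact Prod.ext (by simp) (by simp)
  have hεidem : ε * ε = ε := by
    apply φ.injective
    rw [map_mul, hφε]
    exact Prod.ext (by rw [Prod.fst_mul]; simp) (by rw [Prod.snd_mul]; simp)
  have hze : ε * (1 - ε) = 0 := by rw [mul_sub, mul_one, hεidem, sub_self]
  set ψ : R ≃+* F₂ × F₁ := φ.trans (RingEquiv.prodComm) with hψdef
  have hψsymm : ψ.symm (1, 0) = 1 - ε := by
    have h1 : ψ.symm (1, 0) = φ.symm (RingEquiv.prodComm.symm (1, 0)) := rfl
    have h2 : (RingEquiv.prodComm.symm ((1 : F₂), (0 : F₁))) = ((0 : F₁), (1 : F₂)) := rfl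
    rw [h1, h2, ← hφε', φ.symm_apply_apply]
  have hclass : ∀ K : AnnVert R, K.1 = Ideal.span {ε} ∨ K.1 = Ideal.span {1 - ε} := by
    intro K
    obtain ⟨Kne, Kann⟩ := K.2
    have hdecomp : K.1 = (K.1 ⊓ Ideal.span {ε}) ⊔ (K.1 ⊓ Ideal.span {1 - ε}) := by
      apply le_antisymm
      · intro x hx
        have h1 : x * ε ∈ K.1 ⊓ Ideal.span {ε} :=
          ⟨Ideal.mul_mem_right _ _ hx, Ideal.mem_span_singleton'.mpr ⟨x, rfl⟩⟩
        have h2 : x * (1 - ε) ∈ K.1 ⊓ Ideal.span {1 - ε} :=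
          ⟨Ideal.mul_mem_right _ _ hx, Ideal.mem_span_singleton'.mpr ⟨x, rfl⟩⟩
        have hxe : x = x * ε + x * (1 - ε) := by ring
        rw [hxe]
        exact Submodule.add_mem_sup h1 h2
      · exact sup_le inf_le_left inf_le_left
    by_cases h1 : K.1 ⊓ Ideal.span {ε} = ⊥
    · right
      have h2 : K.1 ⊓ Ideal.span {1 - ε} ≠ ⊥ := by
        intro h
        apply Kne
        rw [hdecomp, h1, h, sup_bot_eq]
      have hmin := span_eps_min ψ (K.1 ⊓ Ideal.span {1 - ε})
        (by rw [hψsymm]; exact inf_le_right) h2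
      rw [hψsymm] at hmin
      rw [hdecomp, h1, bot_sup_eq, hmin]
    · have hfull1 : K.1 ⊓ Ideal.span {ε} = Ideal.span {ε} :=
        span_eps_min φ _ inf_le_right h1
      by_cases h2 : K.1 ⊓ Ideal.span {1 - ε} = ⊥
      · left
        rw [hdecomp, hfull1, h2, sup_bot_eq]
      · exfalso
        have hfull2 : K.1 ⊓ Ideal.span {1 - ε} = Ideal.span {1 - ε} := by
          have := span_eps_min ψ (K.1 ⊓ Ideal.span {1 - ε})
            (by rw [hψsymm]; exact inf_le_right) h2
          rwa [hψsymm] at this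
        have htop : K.1 = ⊤ := by
          rw [hdecomp, hfull1, hfull2, Ideal.eq_top_iff_one]
          exact Submodule.mem_sup.mpr ⟨ε, Ideal.mem_span_singleton_self ε,
            1 - ε, Ideal.mem_span_singleton_self (1 - ε), by ring⟩
        apply Kann
        rw [htop]
        exact ann_top_eq_bot
  intro I J hIJ
  refine ⟨hIJ, ?_⟩
  have hne : I.1 ≠ J.1 := fun h => hIJ (Subtype.ext h)
  rcases hclass I with hI | hI <;> rcases hclass J with hJ | hJ
  · exact absurd (hI.trans hJ.symm) hne
  · rw [hI, hJ, Ideal.span_singleton_mul_span_singleton, hze]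
    exact Ideal.span_singleton_eq_bot.mpr rfl
  · rw [hI, hJ, Ideal.span_singleton_mul_span_singleton, mul_comm, hze]
    exact Ideal.span_singleton_eq_bot.mpr rfl
  · exact absurd (hI.trans hJ.symm) hne

end ProdAux

universe u

theorem stmt6 (R : Type u) [CommRing R] [Nontrivial R] [IsReduced R] (hdom : ¬IsDomain R) :
    List.TFAE [
      ∀ I J : AnnVert R, I ≠ J → (annihilatorIdealGraph R).Adj I J,
      ∀ I J : AnnVert R, I ≠ J → (annihilatingIdealGraph R).Adj I J,
      ∃ (F₁ F₂ : Type u) (_ : Field F₁) (_ : Field F₂), Nonempty (R ≃+* F₁ × F₂)] := by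
  tfae_have 2 → 1 := by
    intro h2 I J hIJ
    obtain ⟨-, hprod⟩ := h2 I J hIJ
    refine ⟨hIJ, ?_⟩
    show ((Submodule.annihilator (I.1 * J.1) : Ideal R) : Set R) ≠ _
    rw [hprod, Submodule.annihilator_bot]
    intro hEq
    have h1 : (1 : R) ∈ ((Submodule.annihilator I.1 : Ideal R) : Set R) ∪
        ↑(Submodule.annihilator J.1) := by
      rw [← hEq]
      exact Submodule.mem_top
    have key : ∀ (K : Ideal R), (1 : R) ∈ Submodule.annihilator K → K = ⊥ := by
      intro K hK
      rw [eq_bot_iff]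
      intro x hx
      have := Submodule.mem_annihilator.mp hK x hx
      rw [one_smul] at this
      exact (Submodule.mem_bot R).mpr this
    rcases h1 with h | h
    · exact I.2.1 (key I.1 h)
    · exact J.2.1 (key J.1 h)
  tfae_have 3 → 2 := by
    rintro ⟨F₁, F₂, hF₁, hF₂, ⟨φ⟩⟩
    exact three_to_two φ
  tfae_have 1 → 3 := by
    intro h1
    -- get zero divisors
    obtain ⟨a, b, hab, ha, hb⟩ : ∃ a b : R, a * b = 0 ∧ a ≠ 0 ∧ b ≠ 0 := by
      by_contra hno
      push_neg at hno
      refine hdom ((isDomain_iff_noZeroDivisors_and_nontrivial R).mpr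
        ⟨⟨fun {x y} hxy => ?_⟩, inferInstance⟩)
      by_cases hx : x = 0
      · exact Or.inl hx
      · exact Or.inr (hno x y hxy hx)
    have hba : b * a = 0 := by rw [mul_comm]; exact hab
    -- annihilator facts in a reduced ring
    have ann2 : ∀ r : R, r * (a * a) = 0 ↔ r * a = 0 := by
      intro r
      constructor
      · intro h
        refine IsReduced.eq_zero _ ⟨2, ?_⟩
        calc (r * a) ^ 2 = r * (r * (a * a)) := by ring
        _ = 0 := by rw [h, mul_zero]
      · intro h
        calc r * (a * a) = (r * a) * a := by ring
        _ = 0 := by rw [h, zero_mul]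
    have ann3 : ∀ r : R, r * (a * (a * a)) = 0 ↔ r * a = 0 := by
      intro r
      constructor
      · intro h
        refine IsReduced.eq_zero _ ⟨3, ?_⟩
        calc (r * a) ^ 3 = (r * r) * (r * (a * (a * a))) := by ring
        _ = 0 := by rw [h, mul_zero]
      · intro h
        calc r * (a * (a * a)) = (r * a) * (a * a) := by ring
        _ = 0 := by rw [h, zero_mul]
    have haa : a * a ≠ 0 := fun h =>
      ha (IsReduced.eq_zero _ ⟨2, by rwa [pow_two]⟩)
    -- span a = span (a*a)
    have hspan : Ideal.span {a} = Ideal.span {a * a} := by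
      by_contra hne
      have hann_a : Submodule.annihilator (Ideal.span {a} : Ideal R) ≠ ⊥ := by
        intro h
        exact hb (by have : b ∈ Submodule.annihilator (Ideal.span {a} : Ideal R) :=
          mem_ann_span_singleton.mpr hba; rwa [h, Submodule.mem_bot] at this)
      have hann_aa : Submodule.annihilator (Ideal.span {a * a} : Ideal R) ≠ ⊥ := by
        intro h
        refine hb ?_
        have : b ∈ Submodule.annihilator (Ideal.span {a * a} : Ideal R) :=
          mem_ann_span_singleton.mpr ((ann2 b).mpr hba)
        rwa [h, Submodule.mem_bot] at this
      set v1 : AnnVert R := ⟨Ideal.span {a},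
        fun h => ha (Ideal.span_singleton_eq_bot.mp h), hann_a⟩
      set v2 : AnnVert R := ⟨Ideal.span {a * a},
        fun h => haa (Ideal.span_singleton_eq_bot.mp h), hann_aa⟩
      have hvne : v1 ≠ v2 := fun h => hne (congrArg Subtype.val h)
      obtain ⟨-, hadj⟩ := h1 v1 v2 hvne
      apply hadj
      show ((Submodule.annihilator (Ideal.span {a} * Ideal.span {a * a}) : Ideal R) : Set R) = _
      rw [Ideal.span_singleton_mul_span_singleton]
      ext x
      simp only [Set.mem_union, SetLike.mem_coe, v1, v2, mem_ann_span_singleton, ann2, ann3]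
      tauto
    -- extract idempotent
    obtain ⟨r, hr⟩ := Ideal.mem_span_singleton'.mp (hspan ▸ Ideal.mem_span_singleton_self a)
    set e := r * a with hedef
    have hea : e * a = a := by
      calc e * a = r * (a * a) := by rw [hedef]; ring
      _ = a := hr
    have he : e * e = e := by
      calc e * e = (r * (a * a)) * r := by rw [hedef]; ring
      _ = a * r := by rw [hr]
      _ = e := by rw [hedef]; ring
    have he0 : e ≠ 0 := fun h => ha (by rw [← hea, h, zero_mul])
    have heb : e * b = 0 := by
      calc e * b = r * (a * b) := by rw [hedef]; ring
      _ = 0 := by rw [hab, mul_zero]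
    have he1 : (1 : R) - e ≠ 0 := by
      intro h
      have h1e : e = 1 := (sub_eq_zero.mp h).symm
      exact hb (by rw [← one_mul b, ← h1e, heb])
    -- the two maximal ideals
    have hm1 : (Ideal.span {e} : Ideal R).IsMaximal := max_ideal h1 he he0 he1
    have hf : (1 - e) * (1 - e) = 1 - e := by
      have : (1 - e) * (1 - e) = 1 - e - e + e * e := by ring
      rw [this, he]; ring
    have hf1 : (1 : R) - (1 - e) ≠ 0 := by rw [sub_sub_cancel]; exact he0
    have hm2 : (Ideal.span {1 - e} : Ideal R).IsMaximal := max_ideal h1 hf he1 hf1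
    -- coprimality and trivial intersection
    have hcop : IsCoprime (Ideal.span {e} : Ideal R) (Ideal.span {1 - e}) := by
      rw [Ideal.isCoprime_iff_sup_eq]
      rw [Ideal.eq_top_iff_one]
      exact Submodule.mem_sup.mpr ⟨e, Ideal.mem_span_singleton_self e,
        1 - e, Ideal.mem_span_singleton_self (1 - e), by ring⟩
    have hinf : (Ideal.span {e} : Ideal R) ⊓ Ideal.span {1 - e} = ⊥ := by
      rw [eq_bot_iff]
      rintro x ⟨hx1, hx2⟩
      obtain ⟨c, hc⟩ := Ideal.mem_span_singleton'.mp hx1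
      obtain ⟨d, hd⟩ := Ideal.mem_span_singleton'.mp hx2
      have hxe : x * e = x := by
        calc x * e = c * (e * e) := by rw [← hc]; ring
        _ = c * e := by rw [he]
        _ = x := hc
      have hxe0 : x * e = 0 := by
        calc x * e = d * (e - e * e) := by rw [← hd]; ring
        _ = 0 := by rw [he, sub_self, mul_zero]
      rw [Submodule.mem_bot, ← hxe, hxe0]
    -- build the ring equivalence
    have hbij : Function.Bijective
        (Ideal.Quotient.mk ((Ideal.span {e} : Ideal R) ⊓ Ideal.span {1 - e})) := by
      constructor
      · rw [RingHom.injective_iff_ker_eq_bot, Ideal.mk_ker, hinf]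
      · exact Ideal.Quotient.mk_surjective
    let E0 : R ≃+* R ⧸ ((Ideal.span {e} : Ideal R) ⊓ Ideal.span {1 - e}) :=
      RingEquiv.ofBijective _ hbij
    let E1 := Ideal.quotientInfEquivQuotientProd (Ideal.span {e}) (Ideal.span {1 - e}) hcop
    exact ⟨R ⧸ (Ideal.span {e} : Ideal R), R ⧸ (Ideal.span {1 - e} : Ideal R),
      Ideal.Quotient.field _, Ideal.Quotient.field _, ⟨E0.trans E1⟩⟩
  tfae_finish
end
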